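/- Let R be a local domain whose integral closure in its fraction field Q is a discrete valuation ring with valuation v. For a nonzero fractional ideal I of R, define v(I) = min{v(y) : y ∈ I, y ≠ 0}. Then v(tr_R(I)) = v(I) + v(I⁻¹). -/

import Mathlib

/-- The trace ideal of an `R`-module `M`: the ideal generated by all images of
`R`-linear maps `M → R`. -/
noncomputable def traceIdeal (R M : Type*) [CommRing R] [AddCommGroup M] [Module R M] :
    Ideal R :=
  ⨆ f : M →ₗ[R] R, LinearMap.range f

/-- Every `R`-linear map from a nonzero `R`-submodule of the fraction field `Q` to `R`
is given by multiplication by an element of `Q`. -/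
lemma exists_mul_rep (R : Type*) [CommRing R] [IsDomain R]
    (Q : Type*) [Field Q] [Algebra R Q] [IsFractionRing R Q]
    (I : Submodule R Q) (x0 : Q) (hx0 : x0 ∈ I) (hx0ne : x0 ≠ 0)
    (f : I →ₗ[R] R) :
    ∃ q : Q, ∀ x : I, algebraMap R Q (f x) = q * (x : Q) := by
  refine ⟨algebraMap R Q (f ⟨x0, hx0⟩) / x0, fun x => ?_⟩
  obtain ⟨⟨r, s⟩, hrs⟩ := IsLocalization.surj (nonZeroDivisors R) ((x : Q) / x0)
  -- (x/x0) * aS = aR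
  have hs0 : algebraMap R Q (s : R) ≠ 0 := by
    simpa using (IsFractionRing.to_map_eq_zero_iff (K := Q)).not.2
      (nonZeroDivisors.ne_zero s.2)
  have hx_eq : algebraMap R Q (s : R) * (x : Q) = algebraMap R Q r * x0 := by
    have h := hrs
    simp only at h
    field_simp at h
    linear_combination h
  have hsx : (s : R) • x = r • (⟨x0, hx0⟩ : I) := by
    apply Subtype.ext
    simpa [Algebra.smul_def] using hx_eq
  have hf : (s : R) * f x = r * f ⟨x0, hx0⟩ := by
    have h := congrArg f hsx
    rw [LinearMap.map_smul, LinearMap.map_smul] at h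
    simpa [smul_eq_mul] using h
  have hfQ : algebraMap R Q (s : R) * algebraMap R Q (f x)
      = algebraMap R Q r * algebraMap R Q (f ⟨x0, hx0⟩) := by
    rw [← map_mul, ← map_mul, hf]
  have hxq : (x : Q) = algebraMap R Q r * x0 / algebraMap R Q (s : R) := by
    rw [eq_div_iff hs0, mul_comm]
    exact hx_eq
  rw [hxq]
  field_simp
  linear_combination hfQ

/-- Let `R` be a local domain whose integral closure in its fraction field `Q` is a
discrete valuation ring with (additive) valuation `v`.  For a nonzero fractional ideal
`I`, letting `v(I)` be the minimum of `v` on nonzero elements, one has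
`v(tr_R(I)) = v(I) + v(I⁻¹)`. -/
theorem stmt3 (R : Type*) [CommRing R] [IsDomain R] [IsLocalRing R]
    (Q : Type*) [Field Q] [Algebra R Q] [IsFractionRing R Q]
    [IsDiscreteValuationRing (integralClosure R Q)]
    (v : AddValuation Q (WithTop ℤ))
    -- `v` is the valuation of the DVR `R̄`: its valuation ring is the integral closure
    (hv : ∀ y : Q, 0 ≤ v y ↔ y ∈ integralClosure R Q)
    -- `v` is normalized (surjective onto `ℤ`)
    (hnorm : ∃ y : Q, v y = 1)
    (I : Submodule R Q) (hIne : I ≠ ⊥) (hIfg : I.FG)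
    -- `Iinv` is the inverse fractional ideal `I⁻¹ = {y ∈ Q : y I ⊆ R}`
    (Iinv : Submodule R Q)
    (hIinv : ∀ y : Q, y ∈ Iinv ↔ ∀ x ∈ I, ∃ r : R, y * x = algebraMap R Q r)
    (vI vInv vTr : ℤ)
    (hvI : IsLeast {n : ℤ | ∃ y ∈ I, y ≠ 0 ∧ v y = (n : WithTop ℤ)} vI)
    (hvInv : IsLeast {n : ℤ | ∃ y ∈ Iinv, y ≠ 0 ∧ v y = (n : WithTop ℤ)} vInv)
    (hvTr : IsLeast {n : ℤ | ∃ r ∈ traceIdeal R I, algebraMap R Q r ≠ 0 ∧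
      v (algebraMap R Q r) = (n : WithTop ℤ)} vTr) :
    vTr = vI + vInv := by
  -- lower bounds on v over I and Iinv
  have hIlb : ∀ y ∈ I, y ≠ 0 → ((vI : WithTop ℤ) ≤ v y) := by
    intro y hy hy0
    have hne : v y ≠ ⊤ := (v.ne_top_iff).2 hy0
    obtain ⟨n, hn⟩ := WithTop.ne_top_iff_exists.1 hne
    have : vI ≤ n := hvI.2 ⟨y, hy, hy0, hn.symm⟩
    rw [← hn]
    exact_mod_cast this
  have hInvlb : ∀ y ∈ Iinv, y ≠ 0 → ((vInv : WithTop ℤ) ≤ v y) := by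
    intro y hy hy0
    have hne : v y ≠ ⊤ := (v.ne_top_iff).2 hy0
    obtain ⟨n, hn⟩ := WithTop.ne_top_iff_exists.1 hne
    have : vInv ≤ n := hvInv.2 ⟨y, hy, hy0, hn.symm⟩
    rw [← hn]
    exact_mod_cast this
  obtain ⟨x0, hx0, hx0ne, hvx0⟩ := hvI.1
  obtain ⟨q0, hq0, hq0ne, hvq0⟩ := hvInv.1
  -- key: every element of the trace ideal has valuation ≥ vI + vInv
  have key : ∀ r ∈ traceIdeal R ↥I, ((vI + vInv : ℤ) : WithTop ℤ) ≤ v (algebraMap R Q r) := by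
    intro r hr
    refine Submodule.iSup_induction (fun f : I →ₗ[R] R => LinearMap.range f)
      (motive := fun r => ((vI + vInv : ℤ) : WithTop ℤ) ≤ v (algebraMap R Q r)) hr ?_ ?_ ?_
    · rintro f _ ⟨x, rfl⟩
      obtain ⟨q, hq⟩ := exists_mul_rep R Q I x0 hx0 hx0ne f
      rw [hq x]
      rcases eq_or_ne (x : Q) 0 with hx | hx
      · simp [hx, v.map_zero]
      rcases eq_or_ne q 0 with hqz | hqz
      · simp [hqz, v.map_zero]
      have hqmem : q ∈ Iinv := by
        rw [hIinv]
        intro y hy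
        exact ⟨f ⟨y, hy⟩, (hq ⟨y, hy⟩).symm⟩
      rw [v.map_mul]
      push_cast
      rw [add_comm (v q)]
      exact add_le_add (hIlb x x.2 hx) (hInvlb q hqmem hqz)
    · simp [v.map_zero]
    · intro a b ha hb
      rw [map_add]
      exact v.map_le_add ha hb
  -- vTr ≥ vI + vInv
  obtain ⟨r, hrmem, hrne, hvr⟩ := hvTr.1
  have h1 : vI + vInv ≤ vTr := by
    have := key r hrmem
    rw [hvr] at this
    exact_mod_cast this
  -- vTr ≤ vI + vInv : build the element q0 * x0
  have hex : ∀ x : I, ∃ r : R, q0 * (x : Q) = algebraMap R Q r := by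
    intro x
    exact (hIinv q0).1 hq0 x x.2
  let f : I →ₗ[R] R :=
    { toFun := fun x => Classical.choose (hex x)
      map_add' := by
        intro a b
        apply IsFractionRing.injective R Q
        rw [map_add, ← Classical.choose_spec (hex (a + b)),
          ← Classical.choose_spec (hex a), ← Classical.choose_spec (hex b)]
        push_cast
        ring
      map_smul' := by
        intro c a
        apply IsFractionRing.injective R Q
        rw [RingHom.id_apply, smul_eq_mul, map_mul,
          ← Classical.choose_spec (hex (c • a)), ← Classical.choose_spec (hex a)]
        have : ((c • a : I) : Q) = algebraMap R Q c * (a : Q) := by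
          simp [Algebra.smul_def]
        rw [this]; ring }
  have hfx0 : algebraMap R Q (f ⟨x0, hx0⟩) = q0 * x0 :=
    (Classical.choose_spec (hex ⟨x0, hx0⟩)).symm
  have hmem : f ⟨x0, hx0⟩ ∈ traceIdeal R ↥I :=
    (le_iSup (fun g : I →ₗ[R] R => LinearMap.range g) f) ⟨⟨x0, hx0⟩, rfl⟩
  have hne0 : algebraMap R Q (f ⟨x0, hx0⟩) ≠ 0 := by
    rw [hfx0]; exact mul_ne_zero hq0ne hx0ne
  have hval : v (algebraMap R Q (f ⟨x0, hx0⟩)) = ((vI + vInv : ℤ) : WithTop ℤ) := by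
    rw [hfx0, v.map_mul, hvq0, hvx0]
    push_cast
    exact add_comm _ _
  have h2 : vTr ≤ vI + vInv := hvTr.2 ⟨f ⟨x0, hx0⟩, hmem, hne0, hval⟩
  omega
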